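/- Let q = 2^m and a₄, a₅, b₁, b₃, b₄, b₅ ∈ 𝔽_q with a₄ ≠ 0 and a₅ ≠ 0. Then the map F(x,y) = (a₄x + a₅y, b₁x² + b₃y² + b₄x + b₅y) is a bijection of 𝔽_q² if and only if exactly one of the two conditions holds: (a₄b₅ + a₅b₄ = 0) or (a₅²b₁ + a₄²b₃ = 0). -/

import Mathlib

/-- For q = 2^m, a₄ ≠ 0, a₅ ≠ 0, the map
F(x,y) = (a₄x + a₅y, b₁x² + b₃y² + b₄x + b₅y) is a bijection of 𝔽_q² iff exactly one
of a₄b₅ + a₅b₄ = 0 and a₅²b₁ + a₄²b₃ = 0 holds. -/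
theorem stmt_4 {F : Type*} [Field F] [Fintype F] (m : ℕ) (hm : 0 < m)
    (hcard : Fintype.card F = 2 ^ m)
    (a₄ a₅ b₁ b₃ b₄ b₅ : F) (ha₄ : a₄ ≠ 0) (ha₅ : a₅ ≠ 0) :
    Function.Bijective (fun p : F × F =>
      (a₄ * p.1 + a₅ * p.2,
       b₁ * p.1 ^ 2 + b₃ * p.2 ^ 2 + b₄ * p.1 + b₅ * p.2)) ↔
      Xor' (a₄ * b₅ + a₅ * b₄ = 0) (a₅ ^ 2 * b₁ + a₄ ^ 2 * b₃ = 0) := by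
  have h2 : (2 : F) = 0 := by
    have h := FiniteField.cast_card_eq_zero F
    rw [hcard] at h
    push_cast at h
    exact pow_eq_zero_iff hm.ne' |>.mp h
  have key : Function.Bijective (fun p : F × F =>
      (a₄ * p.1 + a₅ * p.2,
       b₁ * p.1 ^ 2 + b₃ * p.2 ^ 2 + b₄ * p.1 + b₅ * p.2)) ↔
      ∀ t : F, (a₅ ^ 2 * b₁ + a₄ ^ 2 * b₃) * t ^ 2 + (a₄ * b₅ + a₅ * b₄) * t = 0
        → t = 0 := by
    rw [← Finite.injective_iff_bijective]
    constructor
    · intro hinj t ht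
      have h : ((a₅ * t, a₄ * t) : F × F) = ((0 : F), (0 : F)) := by
        apply hinj
        simp only [Prod.mk.injEq]
        constructor
        · linear_combination a₄ * a₅ * t * h2
        · linear_combination ht
      have h4 : a₄ * t = 0 := congrArg Prod.snd h
      rcases mul_eq_zero.mp h4 with h' | h'
      · exact absurd h' ha₄
      · exact h'
    · rintro hK ⟨p1, p2⟩ ⟨q1, q2⟩ hpq
      simp only [Prod.mk.injEq] at hpq ⊢
      obtain ⟨e1, e2⟩ := hpq
      have hrel : (a₅ ^ 2 * b₁ + a₄ ^ 2 * b₃) * (p2 - q2) ^ 2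
          + a₄ * (a₄ * b₅ + a₅ * b₄) * (p2 - q2) = 0 := by
        linear_combination a₄ ^ 2 * e2
          + (a₄ * b₁ * (p1 + q1) + a₄ * b₄ - a₅ * b₁ * (p2 - q2)) * e1
          + (a₄ * a₅ * b₄ * (p2 - q2) + a₄ ^ 2 * b₃ * (p2 - q2) * q2
             - a₄ * a₅ * b₁ * (p2 - q2) * q1
             - (a₅ * a₄ * p2 * b₄) + a₅ * a₄ * q2 * b₄ - 2 * a₅ ^ 2 * b₁ * p2 * q2
             + a₅ ^ 2 * b₁ * p2 ^ 2 + a₅ ^ 2 * b₁ * q2 ^ 2 + b₁ * a₄ ^ 2 * q1 ^ 2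
             - b₁ * a₄ ^ 2 * p1 ^ 2 - 2 * a₄ ^ 2 * b₃ * p2 * q2
             + 2 * a₄ ^ 2 * b₃ * q2 ^ 2 + a₄ ^ 2 * b₄ * q1 - a₄ ^ 2 * b₄ * p1) * h2
      have hs := hK ((p2 - q2) / a₄) (by field_simp; linear_combination hrel)
      have ht : p2 = q2 := by
        have := (div_eq_zero_iff.mp hs).resolve_right ha₄
        exact sub_eq_zero.mp this
      refine ⟨?_, ht⟩
      rw [ht] at e1
      exact mul_left_cancel₀ ha₄ (add_right_cancel e1)
  rw [key]
  constructor
  · intro hK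
    rcases eq_or_ne (a₄ * b₅ + a₅ * b₄) 0 with hB0 | hB0 <;>
      rcases eq_or_ne (a₅ ^ 2 * b₁ + a₄ ^ 2 * b₃) 0 with hA0 | hA0
    · exfalso
      exact one_ne_zero (hK 1 (by rw [hA0, hB0]; ring))
    · exact Or.inl ⟨hB0, hA0⟩
    · exact Or.inr ⟨hA0, hB0⟩
    · exfalso
      have hne : (a₄ * b₅ + a₅ * b₄) / (a₅ ^ 2 * b₁ + a₄ ^ 2 * b₃) ≠ 0 :=
        div_ne_zero hB0 hA0
      refine hne (hK _ ?_)
      field_simp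
      linear_combination (a₄ * b₅ + a₅ * b₄) ^ 2 * h2
  · rintro (⟨hB0, hA0⟩ | ⟨hA0, hB0⟩) t ht
    · rw [hB0] at ht
      have h' : (a₅ ^ 2 * b₁ + a₄ ^ 2 * b₃) * t ^ 2 = 0 := by linear_combination ht
      have := (mul_eq_zero.mp h').resolve_left hA0
      exact pow_eq_zero_iff two_ne_zero |>.mp this
    · rw [hA0] at ht
      have h' : (a₄ * b₅ + a₅ * b₄) * t = 0 := by linear_combination ht
      exact (mul_eq_zero.mp h').resolve_left hB0
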